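/- arXiv:2411.04729 — 2 statements merged into one kernel-verified Lean document; each statement's English description precedes it below -/
import Mathlib

section
/- Let G be a simple graph on a finite vertex set W of size p, and let v ∈ W be a vertex adjacent to every other vertex of G. For an ordering (bijection) σ : W → {1,…,p}, call an ordered pair of distinct vertices (a,b) with σ(a) < σ(b) a σ-fill-in pair if there is a path in G from a to b all of whose intermediate vertices u satisfy σ(u) < σ(a), and set n_L(σ) = p + |{σ-fill-in pairs}|. Then for any two orderings σ and σ' that induce the same relative order on W∖{v}, if σ'(v) ≥ σ(v) then n_L(σ') ≤ n_L(σ); in particular, the ordering that agrees with σ on W∖{v} and places v last satisfies n_L ≤ n_L(σ). -/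
open scoped Classical

/-- For a simple graph `G` on a finite vertex set `W` and an ordering `σ : W ≃ Fin p`,
the ordered pair of distinct vertices `(a, b)` with `σ a < σ b` is a *σ-fill-in pair*
if there is a walk in `G` from `a` to `b` all of whose intermediate vertices `u`
satisfy `σ u < σ a`. -/
def SigmaFillIn {W : Type*} [Fintype W] (G : SimpleGraph W)
    (σ : W ≃ Fin (Fintype.card W)) (a b : W) : Prop :=
  a ≠ b ∧ σ a < σ b ∧
    ∃ w : G.Walk a b, ∀ u ∈ w.support, u = a ∨ u = b ∨ σ u < σ a

/-- `n_L(σ) = p + #{σ-fill-in pairs}`, the number of potential non-zeros of the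
Cholesky factor under the variable ordering `σ`. -/
noncomputable def nL {W : Type*} [Fintype W] (G : SimpleGraph W)
    (σ : W ≃ Fin (Fintype.card W)) : ℕ :=
  Fintype.card W +
    (Finset.univ.filter (fun q : W × W => SigmaFillIn G σ q.1 q.2)).card

lemma filter_lt_card {W : Type*} [Fintype W] {n : ℕ} (σ : W ≃ Fin n) (c : Fin n) :
    (Finset.univ.filter fun x => σ x < c).card = c := by
  have : (Finset.univ.filter fun x => σ x < c).image σ = Finset.Iio c := by
    ext j
    simp only [Finset.mem_image, Finset.mem_filter, Finset.mem_univ, true_and,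
      Finset.mem_Iio]
    constructor
    · rintro ⟨x, hx, rfl⟩; exact hx
    · intro hj; exact ⟨σ.symm j, by simpa using hj, by simp⟩
  have hcard := Finset.card_image_of_injective
    (Finset.univ.filter fun x => σ x < c) σ.injective
  rw [this, Fin.card_Iio] at hcard
  omega

/-- If `v` is adjacent to every other vertex of `G`, then for any two orderings `σ`, `σ'`
inducing the same relative order on `W \ {v}`, moving `v` later in the ordering does not
increase `n_L`: if `σ v ≤ σ' v` then `n_L(σ') ≤ n_L(σ)`. -/
theorem nL_antitone_in_position_of_dominating_vertex
    {W : Type*} [Fintype W] (G : SimpleGraph W) (v : W)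
    (hv : ∀ w : W, w ≠ v → G.Adj v w)
    (σ σ' : W ≃ Fin (Fintype.card W))
    (hrel : ∀ a b : W, a ≠ v → b ≠ v → (σ a < σ b ↔ σ' a < σ' b))
    (hpos : σ v ≤ σ' v) :
    nL G σ' ≤ nL G σ := by
  -- key lemma: if v is before a in σ', then v is before a in σ
  have keyB : ∀ a : W, a ≠ v → σ' v < σ' a → σ v < σ a := by
    intro a hav h'
    by_contra h
    push_neg at h
    have hne : σ a ≠ σ v := fun e => hav (σ.injective e)
    have hav' : σ a < σ v := lt_of_le_of_ne h hne
    -- count elements before v in σ'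
    have hsub : (Finset.univ.filter fun x => σ' x < σ' v)
        ⊆ (Finset.univ.filter fun x => σ x < σ a) := by
      intro x hx
      simp only [Finset.mem_filter, Finset.mem_univ, true_and] at hx ⊢
      have hxv : x ≠ v := fun e => absurd hx (by subst e; exact lt_irrefl _)
      exact (hrel x a hxv hav).mpr (hx.trans h')
    have := Finset.card_le_card hsub
    rw [filter_lt_card, filter_lt_card] at this
    have h1 : (σ a : ℕ) < (σ v : ℕ) := hav'
    have h2 : (σ v : ℕ) ≤ (σ' v : ℕ) := hpos
    omega
  unfold nL
  apply Nat.add_le_add_left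
  -- injection from σ'-fill-in pairs into σ-fill-in pairs
  set f : W × W → W × W := fun q =>
    if q.1 = v then (if σ v < σ q.2 then (v, q.2) else (q.2, v))
    else if q.2 = v then (if σ v < σ q.1 then (v, q.1) else (q.1, v))
    else q with hf
  apply Finset.card_le_card_of_injOn f
  · -- maps to
    intro q hq
    simp only [Finset.mem_coe, Finset.mem_filter, Finset.mem_univ, true_and] at hq ⊢
    obtain ⟨hne, hlt, w, hw⟩ := hq
    -- helper: fill-in pair involving v via edge
    have edge1 : ∀ x : W, x ≠ v → σ v < σ x → SigmaFillIn G σ v x := by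
      intro x hx h
      refine ⟨fun e => hx e.symm, h, (hv x hx).toWalk, ?_⟩
      intro u hu
      simp [SimpleGraph.Adj.toWalk, SimpleGraph.Walk.support_cons] at hu
      tauto
    have edge2 : ∀ x : W, x ≠ v → σ x < σ v → SigmaFillIn G σ x v := by
      intro x hx h
      refine ⟨hx, h, ((hv x hx).symm).toWalk, ?_⟩
      intro u hu
      simp [SimpleGraph.Adj.toWalk, SimpleGraph.Walk.support_cons] at hu
      tauto
    by_cases h1 : q.1 = v
    · have h2 : q.2 ≠ v := fun e => hne (h1.trans e.symm)
      simp only [hf, h1, if_pos rfl]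
      by_cases hlt2 : σ v < σ q.2
      · simpa [hlt2] using edge1 q.2 h2 hlt2
      · have : σ q.2 < σ v := lt_of_le_of_ne (not_lt.mp hlt2)
          (fun e => h2 (σ.injective e))
        simpa [hlt2] using edge2 q.2 h2 this
    · by_cases h2 : q.2 = v
      · simp only [hf, h1, if_neg h1, h2, if_pos rfl]
        by_cases hlt1 : σ v < σ q.1
        · simpa [hlt1] using edge1 q.1 h1 hlt1
        · have : σ q.1 < σ v := lt_of_le_of_ne (not_lt.mp hlt1)
            (fun e => h1 (σ.injective e))
          simpa [hlt1] using edge2 q.1 h1 this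
      · simp only [hf, if_neg h1, if_neg h2]
        refine ⟨hne, (hrel q.1 q.2 h1 h2).mpr hlt, w, ?_⟩
        intro u hu
        rcases hw u hu with h | h | h
        · exact Or.inl h
        · exact Or.inr (Or.inl h)
        · right; right
          by_cases huv : u = v
          · subst huv; exact keyB q.1 h1 h
          · exact (hrel u q.1 huv h1).mpr h
  · -- injective on: build a left inverse g using σ'
    set g : W × W → W × W := fun s =>
      if s.1 = v then (if σ' v < σ' s.2 then (v, s.2) else (s.2, v))
      else if s.2 = v then (if σ' v < σ' s.1 then (v, s.1) else (s.1, v))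
      else s with hg
    have gf : ∀ q : W × W, SigmaFillIn G σ' q.1 q.2 → g (f q) = q := by
      rintro ⟨a, b⟩ ⟨hne, hlt, -⟩
      simp only at hne hlt
      by_cases h1 : a = v
      · have h2 : b ≠ v := fun e => hne (h1.trans e.symm)
        have hlt' : σ' v < σ' b := h1 ▸ hlt
        by_cases hlt2 : σ v < σ b
        · simp [hf, hg, h1, hlt2, hlt', h2]
        · simp [hf, hg, h1, hlt2, hlt', h2]
      · by_cases h2 : b = v
        · have hlt' : σ' a < σ' v := h2 ▸ hlt
          have hnl : ¬ σ' v < σ' a := asymm hlt'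
          by_cases hlt1 : σ v < σ a
          · simp [hf, hg, h1, h2, hlt1, hnl]
          · simp [hf, hg, h1, h2, hlt1, hnl]
        · simp [hf, hg, h1, h2]
    intro q hq r hr hqr
    simp only [Finset.mem_coe, Finset.mem_filter, Finset.mem_univ, true_and] at hq hr
    rw [← gf q hq, ← gf r hr, hqr]
end

section
/- Let G ≥ 2 and d ≥ 2 be integers. Consider the vertex set {θ_{1,1},…,θ_{1,G}, θ_{2,1},…,θ_{2,G}, θ_0} with the ordering θ_{1,1},…,θ_{1,G}, θ_{2,1},…,θ_{2,G}, θ_0. Define r(1) = 1 and r(j) = ⌈(j−1)/d⌉ for j ≥ 2. Let H be any simple graph on this vertex set that contains, for every j ∈ {1,…,G}, the edges {θ_{1,j}, θ_{2,j}} and {θ_{1,r(j)}, θ_{2,j}}. Then the number of pairs (m,j) with 1 ≤ m ≤ j ≤ G such that m = j or (θ_{2,m}, θ_{2,j}) is a fill-in pair of H (for the given ordering) is at least ((d−1)/d)·(G(G+1)/2 − 1). In particular n_L = Ω(G²) for this design, even though the graph has only O(Gd) edges. -/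
open scoped Classical

/-- The vertex set `{θ_{1,1},…,θ_{1,G}, θ_{2,1},…,θ_{2,G}, θ_0}` of the crossed design
of Example 1 (levels are 0-indexed). -/
abbrev Vtx (G : ℕ) := Fin G ⊕ Fin G ⊕ Unit

/-- Position of a vertex in the ordering `θ_{1,1},…,θ_{1,G}, θ_{2,1},…,θ_{2,G}, θ_0`. -/
def pos {G : ℕ} : Vtx G → ℕ
  | Sum.inl a => a.val
  | Sum.inr (Sum.inl b) => G + b.val
  | Sum.inr (Sum.inr _) => 2 * G

/-- The vertex `θ_{1,j}` (with `j` 0-indexed). -/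
def θ1 {G : ℕ} (a : Fin G) : Vtx G := Sum.inl a

/-- The vertex `θ_{2,j}` (with `j` 0-indexed). -/
def θ2 {G : ℕ} (a : Fin G) : Vtx G := Sum.inr (Sum.inl a)

/-- The 0-indexed version of `r(1) = 1`, `r(j) = ⌈(j−1)/d⌉` for `j ≥ 2`:
level index `i` (0-based, i.e. `j = i + 1`) is mapped to `r(j) - 1 = (i - 1) / d`. -/
def rIdx {G : ℕ} (d : ℕ) (i : Fin G) : Fin G :=
  ⟨(i.val - 1) / d,
    lt_of_le_of_lt (le_trans (Nat.div_le_self _ _) (Nat.sub_le _ _)) i.isLt⟩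

/-- Fill-in pair of `H` with respect to the ordering given by `pos`: `a` comes before `b`
and there is a walk from `a` to `b` whose intermediate vertices all come strictly
before `a`. -/
def FillIn {G : ℕ} (H : SimpleGraph (Vtx G)) (a b : Vtx G) : Prop :=
  a ≠ b ∧ pos a < pos b ∧
    ∃ w : H.Walk a b, ∀ u ∈ w.support, u = a ∨ u = b ∨ pos u < pos a

section Aux

variable {G d : ℕ} {H : SimpleGraph (Vtx G)}

/-- Chain walk from `θ2 k` down to `θ1 0`, through `θ2`-vertices of index `≤ k`. -/
lemma chain_walk (hG : 0 < G)
    (h1 : ∀ i : Fin G, H.Adj (θ1 i) (θ2 i))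
    (h2 : ∀ i : Fin G, H.Adj (θ1 (rIdx d i)) (θ2 i)) :
    ∀ n : ℕ, ∀ k : Fin G, k.val = n →
      ∃ w : H.Walk (θ2 k) (θ1 ⟨0, hG⟩),
        ∀ u ∈ w.support, (∃ a, u = θ1 a) ∨ ∃ a : Fin G, u = θ2 a ∧ a.val ≤ k.val := by
  intro n
  induction n using Nat.strong_induction_on with
  | _ n ih =>
    intro k hk
    rcases Nat.eq_zero_or_pos n with hn | hn
    · -- base case : k = 0
      have hk0 : rIdx d k = ⟨0, hG⟩ := by
        subst hn; simp [rIdx, Fin.ext_iff, hk]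
      refine ⟨SimpleGraph.Walk.cons ((hk0 ▸ h2 k).symm) SimpleGraph.Walk.nil, ?_⟩
      intro u hu
      simp only [SimpleGraph.Walk.support_cons, SimpleGraph.Walk.support_nil,
        List.mem_cons, List.mem_singleton] at hu
      rcases hu with rfl | rfl | h
      · exact Or.inr ⟨k, rfl, le_rfl⟩
      · exact Or.inl ⟨_, rfl⟩
      · exact absurd h (by simp)
    · -- inductive step
      set k' : Fin G := rIdx d k with hk'
      have hlt : k'.val < n := by
        have : (k.val - 1) / d ≤ k.val - 1 := Nat.div_le_self _ _
        have : (k.val - 1) / d < k.val := lt_of_le_of_lt this (by omega)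
        simpa [hk', rIdx, hk] using (by omega : (k.val - 1) / d < n)
      obtain ⟨w', hw'⟩ := ih k'.val hlt k' rfl
      refine ⟨SimpleGraph.Walk.cons (h2 k).symm (SimpleGraph.Walk.cons (h1 k') w'), ?_⟩
      intro u hu
      simp only [SimpleGraph.Walk.support_cons, List.mem_cons] at hu
      rcases hu with rfl | rfl | hu
      · exact Or.inr ⟨k, rfl, le_rfl⟩
      · exact Or.inl ⟨_, rfl⟩
      · rcases hw' u hu with h | ⟨a, rfl, ha⟩
        · exact Or.inl h
        · exact Or.inr ⟨a, rfl, le_trans ha (le_of_lt (hk ▸ hlt))⟩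

lemma θ2_inj {a b : Fin G} (h : θ2 (G := G) a = θ2 b) : a = b := by
  simpa [θ2] using h

/-- Key fill-in lemma: if `rIdx d j ≤ m < j` then `(θ2 m, θ2 j)` is a fill-in pair. -/
lemma fillIn_of_rIdx_le (hG : 0 < G)
    (h1 : ∀ i : Fin G, H.Adj (θ1 i) (θ2 i))
    (h2 : ∀ i : Fin G, H.Adj (θ1 (rIdx d i)) (θ2 i))
    {m j : Fin G} (hmj : m < j) (hr : (rIdx d j).val ≤ m.val) :
    FillIn H (θ2 m) (θ2 j) := by
  have hmlt : m.val < j.val := hmj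
  refine ⟨fun h => absurd (θ2_inj h) (Fin.ne_of_lt hmj), ?_, ?_⟩
  · show G + m.val < G + j.val
    omega
  · obtain ⟨wm, hwm⟩ := chain_walk hG h1 h2 m.val m rfl
    obtain ⟨wr, hwr⟩ := chain_walk hG h1 h2 (rIdx d j).val (rIdx d j) rfl
    -- walk from θ2 j to θ1 0
    set wj : H.Walk (θ2 j) (θ1 ⟨0, hG⟩) :=
      SimpleGraph.Walk.cons (h2 j).symm (SimpleGraph.Walk.cons (h1 (rIdx d j)) wr) with hwj
    refine ⟨wm.append wj.reverse, ?_⟩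
    intro u hu
    rw [SimpleGraph.Walk.mem_support_append_iff] at hu
    have hpos2 : ∀ a : Fin G, a.val < m.val → pos (θ2 a) < pos (θ2 (G := G) m) := by
      intro a ha; show G + a.val < G + m.val; omega
    have hpos1 : ∀ a : Fin G, pos (θ1 a) < pos (θ2 (G := G) m) := by
      intro a; show a.val < G + m.val; omega
    have hcase : ∀ a : Fin G, a.val ≤ m.val →
        θ2 a = θ2 (G := G) m ∨ θ2 a = θ2 j ∨ pos (θ2 a) < pos (θ2 (G := G) m) := by
      intro a ha
      rcases lt_or_eq_of_le ha with h | h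
      · exact Or.inr (Or.inr (hpos2 a h))
      · exact Or.inl (by rw [Fin.ext_iff.mpr h])
    rcases hu with hu | hu
    · rcases hwm u hu with ⟨a, rfl⟩ | ⟨a, rfl, ha⟩
      · exact Or.inr (Or.inr (hpos1 a))
      · exact hcase a ha
    · rw [SimpleGraph.Walk.support_reverse, List.mem_reverse] at hu
      rw [hwj] at hu
      simp only [SimpleGraph.Walk.support_cons, List.mem_cons] at hu
      rcases hu with rfl | rfl | hu
      · exact Or.inr (Or.inl rfl)
      · exact Or.inr (Or.inr (hpos1 _))
      · rcases hwr u hu with ⟨a, rfl⟩ | ⟨a, rfl, ha⟩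
        · exact Or.inr (Or.inr (hpos1 a))
        · exact hcase a (le_trans ha hr)

end Aux

/-- Example 1 of the paper: if `H` contains, for every level `j`, the edges
`{θ_{1,j}, θ_{2,j}}` and `{θ_{1,r(j)}, θ_{2,j}}`, then the number of pairs `(m, j)` with
`m ≤ j` such that `m = j` or `(θ_{2,m}, θ_{2,j})` is a fill-in pair of `H` is at least
`((d−1)/d)·(G(G+1)/2 − 1)`; hence `n_L = Ω(G²)`. -/
theorem fillIn_lower_bound_example (G d : ℕ) (hG : 2 ≤ G) (hd : 2 ≤ d)
    (H : SimpleGraph (Vtx G))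
    (h1 : ∀ i : Fin G, H.Adj (θ1 i) (θ2 i))
    (h2 : ∀ i : Fin G, H.Adj (θ1 (rIdx d i)) (θ2 i)) :
    ((d : ℝ) - 1) / d * (G * (G + 1) / 2 - 1)
      ≤ ((Finset.univ.filter (fun q : Fin G × Fin G =>
            q.1 ≤ q.2 ∧ (q.1 = q.2 ∨ FillIn H (θ2 q.1) (θ2 q.2)))).card : ℝ) := by
  have hG0 : 0 < G := by omega
  set T := Finset.univ.filter (fun q : Fin G × Fin G =>
      q.1 ≤ q.2 ∧ (q.1 = q.2 ∨ FillIn H (θ2 q.1) (θ2 q.2))) with hT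
  -- the explicit lower-bound set
  set B : Finset (Fin G × Fin G) :=
    Finset.univ.biUnion (fun j : Fin G =>
      (Finset.Icc (rIdx d j) j).map ⟨fun m => (m, j), fun a b h => by
        simpa using congrArg Prod.fst h⟩) with hB
  have hBT : B ⊆ T := by
    intro q hq
    rw [hB, Finset.mem_biUnion] at hq
    obtain ⟨j, -, hq⟩ := hq
    rw [Finset.mem_map] at hq
    obtain ⟨m, hm, rfl⟩ := hq
    rw [Finset.mem_Icc] at hm
    rw [hT, Finset.mem_filter]
    refine ⟨Finset.mem_univ _, hm.2, ?_⟩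
    rcases eq_or_lt_of_le hm.2 with h | h
    · exact Or.inl h
    · exact Or.inr (fillIn_of_rIdx_le hG0 h1 h2 h hm.1)
  have hcardB : B.card = ∑ j : Fin G, (j.val + 1 - (j.val - 1) / d) := by
    rw [hB, Finset.card_biUnion]
    · refine Finset.sum_congr rfl fun j _ => ?_
      rw [Finset.card_map, Fin.card_Icc]
      rfl
    · intro x _ y _ hxy
      simp only [Finset.disjoint_left, Finset.mem_map, Function.Embedding.coeFn_mk]
      rintro q ⟨a, -, rfl⟩ ⟨b, -, hb⟩
      exact hxy ((congrArg Prod.snd hb).symm)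
  have hcard : (B.card : ℝ) ≤ (T.card : ℝ) := by
    exact_mod_cast Finset.card_le_card hBT
  refine le_trans ?_ hcard
  rw [hcardB]
  push_cast
  -- lower bound each term by j + 1 - j/d
  have hterm : ∀ j : Fin G,
      (j.val : ℝ) + 1 - (j.val : ℝ) / d ≤ ((j.val + 1 - (j.val - 1) / d : ℕ) : ℝ) := by
    intro j
    have h1' : (j.val - 1) / d ≤ j.val + 1 := by
      have := Nat.div_le_self (j.val - 1) d; omega
    rw [Nat.cast_sub h1']
    push_cast
    have : ((((j.val : ℕ) - 1) / d : ℕ) : ℝ) ≤ (j.val : ℝ) / d := by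
      refine le_trans Nat.cast_div_le ?_
      gcongr
      exact_mod_cast Nat.sub_le j.val 1
    linarith
  have hsum : ∑ j : Fin G, ((j.val : ℝ) + 1 - (j.val : ℝ) / d)
      ≤ ∑ j : Fin G, ((j.val + 1 - (j.val - 1) / d : ℕ) : ℝ) :=
    Finset.sum_le_sum fun j _ => hterm j
  refine le_trans ?_ hsum
  -- compute the left sum
  have hid : ∑ j : Fin G, (j.val : ℝ) = G * (G - 1) / 2 := by
    rw [Fin.sum_univ_eq_sum_range (fun i => (i : ℝ))]
    have h2' := Finset.sum_range_id_mul_two G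
    have h3 : ((∑ i ∈ Finset.range G, i : ℕ) : ℝ) * 2 = ((G * (G - 1) : ℕ) : ℝ) := by
      exact_mod_cast h2'
    rw [Nat.cast_sum, Nat.cast_mul, Nat.cast_sub (by omega : 1 ≤ G), Nat.cast_one] at h3
    linarith
  have hdpos : (0:ℝ) < d := by exact_mod_cast (by omega : 0 < d)
  have hG1 : (2:ℝ) ≤ G := by exact_mod_cast hG
  have hd1 : (2:ℝ) ≤ d := by exact_mod_cast hd
  rw [Finset.sum_sub_distrib, Finset.sum_add_distrib, hid]
  simp only [Finset.sum_const, Finset.card_univ, Fintype.card_fin, nsmul_eq_mul, mul_one]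
  rw [← Finset.sum_div, hid]
  have key : ((d:ℝ) - 1) / d * ((G:ℝ) * (G + 1) / 2 - 1)
      ≤ (G:ℝ) * ((G:ℝ) - 1) / 2 + G - (G:ℝ) * ((G:ℝ) - 1) / 2 / d := by
    rw [div_mul_eq_mul_div, div_le_iff₀ hdpos]
    have expand : ((G:ℝ) * ((G:ℝ) - 1) / 2 + G - (G:ℝ) * ((G:ℝ) - 1) / 2 / d) * d
        = (G:ℝ) * ((G:ℝ) - 1) / 2 * d + G * d - (G:ℝ) * ((G:ℝ) - 1) / 2 := by
      field_simp
    rw [expand]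
    nlinarith [mul_nonneg (sub_nonneg.mpr hG1) (sub_nonneg.mpr hd1)]
  linarith [key]
end
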